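/- arXiv:0912.5271 — 3 statements merged into one kernel-verified Lean document; each statement's English description precedes it below -/
import Mathlib

section
/- Let I: S → [0,∞] be defined by I(f) = (1/2) inf{‖h‖² : h ∈ H, Z₀(h) = f}, where H is a Hilbert space, S a metric space, and Z₀: H → S a map such that for every N, the image under Z₀ of any sequence in the closed ball of radius N that converges weakly has a subsequence whose images converge in S to the image of the weak limit. Then for every a < ∞, the sublevel set {f ∈ S : I(f) ≤ a} is compact in S. -/
open scoped RealInnerProductSpace ENNReal
open Filter Topology
/-- Weak sequential compactness of bounded sequences in a separable real Hilbert space. -/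
theorem exists_weak_subseq {H : Type*}
    [NormedAddCommGroup H] [InnerProductSpace ℝ H] [CompleteSpace H]
    [SecondCountableTopology H]
    (N : ℝ) (hN : 0 ≤ N) (x : ℕ → H) (hb : ∀ n, ‖x n‖ ≤ N) :
    ∃ (k : ℕ → ℕ) (y : H), StrictMono k ∧
      ∀ φ : H, Tendsto (fun n => ⟪x (k n), φ⟫) atTop (𝓝 ⟪y, φ⟫) := by
  haveI : Nonempty H := ⟨0⟩
  set d : ℕ → H := TopologicalSpace.denseSeq H with hd_def
  have hd : DenseRange d := TopologicalSpace.denseRange_denseSeq H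
  set C : ℕ → ℝ := fun i => N * ‖d i‖ with hC
  have hbound : ∀ n i, ⟪x n, d i⟫ ∈ Set.Icc (-(C i)) (C i) := by
    intro n i
    have h1 : |⟪x n, d i⟫| ≤ ‖x n‖ * ‖d i‖ := abs_real_inner_le_norm _ _
    have h2 : ‖x n‖ * ‖d i‖ ≤ C i :=
      mul_le_mul_of_nonneg_right (hb n) (norm_nonneg _)
    exact abs_le.mp (h1.trans h2)
  haveI : ∀ i : ℕ, CompactSpace (Set.Icc (-(C i)) (C i)) :=
    fun i => isCompact_iff_compactSpace.mp isCompact_Icc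
  set g : ℕ → ∀ i : ℕ, Set.Icc (-(C i)) (C i) := fun n i => ⟨⟪x n, d i⟫, hbound n i⟩ with hg
  obtain ⟨L, k, hk, hconv⟩ := CompactSpace.tendsto_subseq g
  have hdconv : ∀ i, Tendsto (fun n => ⟪x (k n), d i⟫) atTop (𝓝 (L i : ℝ)) := by
    intro i
    have h1 : Tendsto (fun n => (g (k n)) i) atTop (𝓝 (L i)) :=
      ((continuous_apply i).continuousAt.tendsto).comp hconv
    exact ((continuous_subtype_val).continuousAt.tendsto).comp h1
  -- Cauchy at every φ
  have hc : ∀ φ : H, CauchySeq (fun n => ⟪x (k n), φ⟫) := by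
    intro φ
    rw [Metric.cauchySeq_iff]
    intro ε hε
    obtain ⟨i, hi⟩ := hd.exists_dist_lt φ (show 0 < ε / (4 * (N + 1)) by positivity)
    obtain ⟨M, hM⟩ := Metric.cauchySeq_iff.mp (hdconv i).cauchySeq (ε / 2) (by positivity)
    refine ⟨M, fun m hm n hn => ?_⟩
    have key : |⟪x (k m) - x (k n), φ - d i⟫| ≤ ε / 2 := by
      have h1 : |⟪x (k m) - x (k n), φ - d i⟫| ≤ ‖x (k m) - x (k n)‖ * ‖φ - d i‖ :=
        abs_real_inner_le_norm _ _
      have h2 : ‖x (k m) - x (k n)‖ ≤ 2 * N := by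
        calc ‖x (k m) - x (k n)‖ ≤ ‖x (k m)‖ + ‖x (k n)‖ := norm_sub_le _ _
        _ ≤ N + N := add_le_add (hb _) (hb _)
        _ = 2 * N := by ring
      have h3 : ‖φ - d i‖ ≤ ε / (4 * (N + 1)) := by
        rw [← dist_eq_norm]; exact hi.le
      have h4 : (2 * N) * (ε / (4 * (N + 1))) ≤ (2 * (N + 1)) * (ε / (4 * (N + 1))) :=
        mul_le_mul_of_nonneg_right (by linarith) (by positivity)
      have h5 : (2 * (N + 1)) * (ε / (4 * (N + 1))) = ε / 2 := by
        field_simp; ring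
      calc |⟪x (k m) - x (k n), φ - d i⟫| ≤ ‖x (k m) - x (k n)‖ * ‖φ - d i‖ := h1
      _ ≤ (2 * N) * (ε / (4 * (N + 1))) :=
          mul_le_mul h2 h3 (norm_nonneg _) (by positivity)
      _ ≤ ε / 2 := h5 ▸ h4
    have hsplit : ⟪x (k m), φ⟫ - ⟪x (k n), φ⟫ =
        (⟪x (k m), d i⟫ - ⟪x (k n), d i⟫) + ⟪x (k m) - x (k n), φ - d i⟫ := by
      simp only [inner_sub_left, inner_sub_right]; ring
    rw [Real.dist_eq, hsplit]
    have hA : |⟪x (k m), d i⟫ - ⟪x (k n), d i⟫| < ε / 2 := by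
      have := hM m hm n hn; rwa [Real.dist_eq] at this
    calc |(⟪x (k m), d i⟫ - ⟪x (k n), d i⟫) + ⟪x (k m) - x (k n), φ - d i⟫|
        ≤ |⟪x (k m), d i⟫ - ⟪x (k n), d i⟫| + |⟪x (k m) - x (k n), φ - d i⟫| := abs_add_le _ _
      _ < ε / 2 + ε / 2 := add_lt_add_of_lt_of_le hA key
      _ = ε := by ring
  -- limits exist
  classical
  set ℓf : H → ℝ := fun φ => limUnder atTop (fun n => ⟪x (k n), φ⟫) with hℓf
  have hL : ∀ φ, Tendsto (fun n => ⟪x (k n), φ⟫) atTop (𝓝 (ℓf φ)) := by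
    intro φ
    exact (hc φ).tendsto_limUnder
  have hadd : ∀ φ ψ : H, ℓf (φ + ψ) = ℓf φ + ℓf ψ := by
    intro φ ψ
    refine tendsto_nhds_unique (hL (φ + ψ)) ?_
    have := (hL φ).add (hL ψ)
    simpa only [inner_add_right] using this
  have hsmul : ∀ (c : ℝ) (φ : H), ℓf (c • φ) = c * ℓf φ := by
    intro c φ
    refine tendsto_nhds_unique (hL (c • φ)) ?_
    have := (hL φ).const_mul c
    simpa only [real_inner_smul_right] using this
  have hbnd : ∀ φ : H, ‖ℓf φ‖ ≤ N * ‖φ‖ := by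
    intro φ
    rw [Real.norm_eq_abs]
    refine le_of_tendsto (hL φ).abs (Eventually.of_forall fun n => ?_)
    calc |⟪x (k n), φ⟫| ≤ ‖x (k n)‖ * ‖φ‖ := abs_real_inner_le_norm _ _
    _ ≤ N * ‖φ‖ := mul_le_mul_of_nonneg_right (hb _) (norm_nonneg _)
  set ℓ : H →L[ℝ] ℝ :=
    LinearMap.mkContinuous
      { toFun := ℓf
        map_add' := hadd
        map_smul' := hsmul } N hbnd with hℓ
  set y : H := (InnerProductSpace.toDual ℝ H).symm ℓ with hy
  refine ⟨k, y, hk, fun φ => ?_⟩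
  have : ⟪y, φ⟫ = ℓ φ := by
    rw [hy, ← InnerProductSpace.toDual_apply_apply, LinearIsometryEquiv.apply_symm_apply]
  rw [this]
  exact hL φ

/-- Under condition (LD)₂, the rate function `I(f) = ½ inf{‖h‖² : Z₀(h) = f}`
has compact sublevel sets. -/
theorem stmt10 {H S : Type*}
    [NormedAddCommGroup H] [InnerProductSpace ℝ H] [CompleteSpace H]
    [SecondCountableTopology H]
    [MetricSpace S]
    (Z₀ : H → S)
    (hLD2 : ∀ N : ℝ, 0 < N → ∀ hn : ℕ → H, (∀ n, ‖hn n‖ ≤ N) → ∀ h : H,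
      (∀ φ : H, Filter.Tendsto (fun n => ⟪hn n, φ⟫) Filter.atTop (nhds ⟪h, φ⟫)) →
      ∃ k : ℕ → ℕ, StrictMono k ∧
        Filter.Tendsto (fun j => Z₀ (hn (k j))) Filter.atTop (nhds (Z₀ h)))
    (I : S → ℝ≥0∞)
    (hI : ∀ f, I f = (1/2 : ℝ≥0∞) * ⨅ (h : H) (_ : Z₀ h = f), ENNReal.ofReal (‖h‖ ^ 2)) :
    ∀ a : ℝ≥0∞, a < ⊤ → IsCompact {f : S | I f ≤ a} := by
  intro a ha
  suffices hseq : IsSeqCompact {f : S | I f ≤ a} from hseq.isCompact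
  intro f hf
  -- From I (f n) ≤ a get the infimum bound
  have h2a : (2 : ℝ≥0∞) * a < ⊤ := ENNReal.mul_lt_top ENNReal.ofNat_lt_top ha
  have hinf : ∀ n, (⨅ (h : H) (_ : Z₀ h = f n), ENNReal.ofReal (‖h‖ ^ 2)) ≤ 2 * a := by
    intro n
    have h1 : I (f n) ≤ a := hf n
    rw [hI] at h1
    calc (⨅ (h : H) (_ : Z₀ h = f n), ENNReal.ofReal (‖h‖ ^ 2))
        = 2 * ((1/2 : ℝ≥0∞) * ⨅ (h : H) (_ : Z₀ h = f n), ENNReal.ofReal (‖h‖ ^ 2)) := by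
          rw [← mul_assoc]
          norm_num
          rw [ENNReal.mul_inv_cancel (by norm_num) (by norm_num), one_mul]
      _ ≤ 2 * a := mul_le_mul_right h1 2
  -- choose near-optimal preimages
  have hex : ∀ n : ℕ, ∃ h : H, Z₀ h = f n ∧
      ENNReal.ofReal (‖h‖ ^ 2) < 2 * a + ENNReal.ofReal (1 / (n + 1)) := by
    intro n
    have hlt : (⨅ (h : H) (_ : Z₀ h = f n), ENNReal.ofReal (‖h‖ ^ 2)) <
        2 * a + ENNReal.ofReal (1 / (n + 1)) := by
      refine (hinf n).trans_lt ?_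
      exact ENNReal.lt_add_right h2a.ne (by
        simp [ENNReal.ofReal_eq_zero]
        positivity)
    obtain ⟨h, hh⟩ := iInf_lt_iff.mp hlt
    obtain ⟨hz, hlt2⟩ := iInf_lt_iff.mp hh
    exact ⟨h, hz, hlt2⟩
  choose hn hZ hlt using hex
  set b : ℝ := (2 * a).toReal with hb_def
  have hb0 : 0 ≤ b := ENNReal.toReal_nonneg
  have hnormsq : ∀ n, ‖hn n‖ ^ 2 ≤ b + 1 / (n + 1) := by
    intro n
    have h1 : ENNReal.ofReal (‖hn n‖ ^ 2) ≤ ENNReal.ofReal (b + 1 / (n + 1)) := by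
      have : (2 : ℝ≥0∞) * a + ENNReal.ofReal (1 / (n + 1)) =
          ENNReal.ofReal (b + 1 / (n + 1)) := by
        rw [ENNReal.ofReal_add hb0 (by positivity), hb_def,
          ENNReal.ofReal_toReal h2a.ne]
      exact this ▸ (hlt n).le
    exact (ENNReal.ofReal_le_ofReal_iff (by positivity)).mp h1
  have hnorm : ∀ n, ‖hn n‖ ≤ Real.sqrt (b + 1 / (n + 1)) := by
    intro n
    have := Real.sqrt_le_sqrt (hnormsq n)
    rwa [Real.sqrt_sq (norm_nonneg _)] at this
  set N : ℝ := Real.sqrt (b + 1) with hN_def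
  have hNpos : 0 < N := Real.sqrt_pos.mpr (by positivity)
  have hbd : ∀ n, ‖hn n‖ ≤ N := by
    intro n
    refine (hnorm n).trans (Real.sqrt_le_sqrt ?_)
    have : (1 : ℝ) / (n + 1) ≤ 1 := by
      rw [div_le_one (by positivity)]
      linarith [Nat.cast_nonneg (α := ℝ) n]
    linarith
  obtain ⟨k₀, y, hk₀, hweak⟩ := exists_weak_subseq N hNpos.le hn hbd
  obtain ⟨k₁, hk₁, hZconv⟩ := hLD2 N hNpos (fun n => hn (k₀ n)) (fun n => hbd _) y hweak
  -- norm bound on y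
  have hy2 : ‖y‖ ^ 2 ≤ b := by
    have hten : Tendsto (fun n => ⟪hn (k₀ n), y⟫) atTop (𝓝 (‖y‖ ^ 2)) := by
      have := hweak y
      rwa [real_inner_self_eq_norm_sq] at this
    have hub : Tendsto (fun n => Real.sqrt (b + 1 / (k₀ n + 1)) * ‖y‖) atTop
        (𝓝 (Real.sqrt b * ‖y‖)) := by
      have h0 : Tendsto (fun n => (1 : ℝ) / (k₀ n + 1)) atTop (𝓝 0) := by
        have := tendsto_one_div_add_atTop_nhds_zero_nat (𝕜 := ℝ)
        exact this.comp (hk₀.tendsto_atTop)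
      have h1 : Tendsto (fun n => b + (1 : ℝ) / (k₀ n + 1)) atTop (𝓝 (b + 0)) :=
        tendsto_const_nhds.add h0
      rw [add_zero] at h1
      exact ((Real.continuous_sqrt.tendsto b).comp h1).mul_const _
    have hle : ‖y‖ ^ 2 ≤ Real.sqrt b * ‖y‖ := by
      refine le_of_tendsto_of_tendsto' hten hub fun n => ?_
      calc ⟪hn (k₀ n), y⟫ ≤ ‖hn (k₀ n)‖ * ‖y‖ := real_inner_le_norm _ _
      _ ≤ Real.sqrt (b + 1 / (k₀ n + 1)) * ‖y‖ :=
          mul_le_mul_of_nonneg_right (hnorm _) (norm_nonneg _)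
    rcases eq_or_lt_of_le (norm_nonneg y) with h0 | h0
    · rw [← h0]; simpa using hb0
    · have : ‖y‖ ≤ Real.sqrt b := by
        have := hle
        rw [sq] at this
        exact le_of_mul_le_mul_right this h0
      calc ‖y‖ ^ 2 ≤ Real.sqrt b ^ 2 := by
            exact pow_le_pow_left₀ (norm_nonneg _) this 2
      _ = b := Real.sq_sqrt hb0
  -- membership of the limit
  have hmem : I (Z₀ y) ≤ a := by
    rw [hI]
    have h1 : (⨅ (h : H) (_ : Z₀ h = Z₀ y), ENNReal.ofReal (‖h‖ ^ 2)) ≤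
        ENNReal.ofReal (‖y‖ ^ 2) := iInf_le_of_le y (iInf_le _ rfl)
    have h2 : ENNReal.ofReal (‖y‖ ^ 2) ≤ 2 * a := by
      calc ENNReal.ofReal (‖y‖ ^ 2) ≤ ENNReal.ofReal b := ENNReal.ofReal_le_ofReal hy2
      _ = 2 * a := ENNReal.ofReal_toReal h2a.ne
    calc (1/2 : ℝ≥0∞) * ⨅ (h : H) (_ : Z₀ h = Z₀ y), ENNReal.ofReal (‖h‖ ^ 2)
        ≤ (1/2 : ℝ≥0∞) * (2 * a) := mul_le_mul_right (h1.trans h2) _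
      _ = a := by
          rw [← mul_assoc]
          norm_num
          rw [ENNReal.inv_mul_cancel (by norm_num) (by norm_num), one_mul]
  refine ⟨Z₀ y, hmem, k₀ ∘ k₁, hk₀.comp hk₁, ?_⟩
  have : (f ∘ (k₀ ∘ k₁)) = fun j => Z₀ (hn (k₀ (k₁ j))) := by
    funext j
    exact (hZ _).symm
  rw [this]
  exact hZconv
end

section
/- Let A be a maximal monotone operator on R^m with a ∈ Int(D(A)). Then there exist γ > 0 and μ ≥ 0 such that ⟨y, x - a⟩ ≥ γ|y| - μ|x - a| - γμ for all (x, y) ∈ Gr(A). -/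
open scoped RealInnerProductSpace

/-- Cépa's pointwise estimate: for a maximal monotone `A` and `a ∈ Int(D(A))`,
there are `γ > 0`, `μ ≥ 0` with `⟨y, x - a⟩ ≥ γ|y| - μ|x - a| - γμ` on `Gr(A)`. -/
theorem stmt13 {m : ℕ}
    (A : EuclideanSpace ℝ (Fin m) → Set (EuclideanSpace ℝ (Fin m)))
    (hmono : ∀ x₁ x₂ y₁ y₂, y₁ ∈ A x₁ → y₂ ∈ A x₂ → 0 ≤ ⟪y₁ - y₂, x₁ - x₂⟫)
    (hmax : ∀ x y, (∀ x' y', y' ∈ A x' → 0 ≤ ⟪y - y', x - x'⟫) → y ∈ A x)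
    (a : EuclideanSpace ℝ (Fin m))
    (ha : a ∈ interior {x | (A x).Nonempty}) :
    ∃ γ : ℝ, 0 < γ ∧ ∃ μ : ℝ, 0 ≤ μ ∧
      ∀ x y, y ∈ A x → γ * ‖y‖ - μ * ‖x - a‖ - γ * μ ≤ ⟪y, x - a⟫ := by
  obtain ⟨ε, hε, hball⟩ := Metric.isOpen_iff.mp isOpen_interior a ha
  set γ : ℝ := ε / 3 with hγdef
  have hγ : 0 < γ := by positivity
  have hdom : ∀ b : EuclideanSpace ℝ (Fin m), ‖b - a‖ ≤ 2 * γ → (A b).Nonempty := by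
    intro b hb
    have : b ∈ Metric.ball a ε := by
      rw [Metric.mem_ball, dist_eq_norm]
      linarith
    have hmem : b ∈ {x | (A x).Nonempty} := interior_subset (hball this)
    exact hmem
  -- local boundedness near `a`
  have hbdd : ∃ μ : ℝ, 0 ≤ μ ∧ ∀ b, ‖b - a‖ ≤ γ → ∃ z ∈ A b, ‖z‖ ≤ μ := by
    by_contra hcon
    push_neg at hcon
    choose b hb hbig using fun n : ℕ => hcon n (Nat.cast_nonneg n)
    choose z hz using fun n : ℕ => hdom (b n) (le_trans (hb n) (by linarith))
    have hzn : ∀ n : ℕ, (n : ℝ) < ‖z n‖ := fun n => hbig n _ (hz n)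
    have hzpos : ∀ n : ℕ, 0 < ‖z n‖ := fun n =>
      lt_of_le_of_lt (Nat.cast_nonneg n) (hzn n)
    set u : ℕ → EuclideanSpace ℝ (Fin m) := fun n => ‖z n‖⁻¹ • z n with hudef
    have hunorm : ∀ n, ‖u n‖ = 1 := by
      intro n
      rw [hudef]
      simp only [norm_smul, norm_inv, norm_norm]
      field_simp [ne_of_gt (hzpos n)]
    set p : ℕ → EuclideanSpace ℝ (Fin m) × EuclideanSpace ℝ (Fin m) :=
      fun n => (b n, u n) with hpdef
    have hcomp : IsCompact ((Metric.closedBall a γ) ×ˢ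
        (Metric.closedBall (0 : EuclideanSpace ℝ (Fin m)) 1)) :=
      (isCompact_closedBall a γ).prod (isCompact_closedBall 0 1)
    have hpmem : ∀ n, p n ∈ (Metric.closedBall a γ) ×ˢ
        (Metric.closedBall (0 : EuclideanSpace ℝ (Fin m)) 1) := by
      intro n
      constructor
      · rw [Metric.mem_closedBall, dist_eq_norm]; exact hb n
      · rw [Metric.mem_closedBall, dist_zero_right, hunorm n]
    obtain ⟨q, hqmem, φ, hφ, hconv⟩ := hcomp.tendsto_subseq hpmem
    obtain ⟨bb, e⟩ := q
    have hbconv : Filter.Tendsto (fun n => b (φ n)) Filter.atTop (nhds bb) :=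
      (continuous_fst.tendsto _).comp hconv
    have heconv : Filter.Tendsto (fun n => u (φ n)) Filter.atTop (nhds e) :=
      (continuous_snd.tendsto _).comp hconv
    have henorm : ‖e‖ = 1 := by
      have h1 : Filter.Tendsto (fun n => ‖u (φ n)‖) Filter.atTop (nhds ‖e‖) :=
        heconv.norm
      have h2 : (fun n => ‖u (φ n)‖) = fun _ => (1 : ℝ) := funext fun n => hunorm _
      rw [h2] at h1
      exact (tendsto_nhds_unique tendsto_const_nhds h1).symm
    have hbbmem : ‖bb - a‖ ≤ γ := by
      have := hqmem.1
      rwa [Metric.mem_closedBall, dist_eq_norm] at this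
    -- key limit inequality: 0 ≤ ⟪e, bb - v⟫ for all (v, w) in graph
    have hkey : ∀ v w : EuclideanSpace ℝ (Fin m), w ∈ A v → 0 ≤ ⟪e, bb - v⟫ := by
      intro v w hw
      have hineq : ∀ n : ℕ, ⟪w, b (φ n) - v⟫ / ‖z (φ n)‖ ≤ ⟪u (φ n), b (φ n) - v⟫ := by
        intro n
        have h0 := hmono (b (φ n)) v (z (φ n)) w (hz (φ n)) hw
        rw [inner_sub_left] at h0
        have h1 : ⟪w, b (φ n) - v⟫ ≤ ⟪z (φ n), b (φ n) - v⟫ := by linarith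
        have h2 : ⟪u (φ n), b (φ n) - v⟫ = ‖z (φ n)‖⁻¹ * ⟪z (φ n), b (φ n) - v⟫ := by
          rw [hudef]; exact real_inner_smul_left _ _ _
        rw [h2, div_eq_inv_mul]
        exact mul_le_mul_of_nonneg_left h1 (inv_nonneg.mpr (hzpos (φ n)).le)
      have hlim0 : Filter.Tendsto (fun n => ⟪w, b (φ n) - v⟫ / ‖z (φ n)‖)
          Filter.atTop (nhds 0) := by
        refine squeeze_zero_norm (a := fun n => (‖w‖ * (γ + ‖a - v‖)) * ‖z (φ n)‖⁻¹) ?_ ?_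
        · intro n
          rw [Real.norm_eq_abs, abs_div, abs_norm, div_eq_mul_inv]
          apply mul_le_mul_of_nonneg_right _ (inv_nonneg.mpr (norm_nonneg _))
          calc |⟪w, b (φ n) - v⟫| ≤ ‖w‖ * ‖b (φ n) - v‖ := abs_real_inner_le_norm _ _
            _ ≤ ‖w‖ * (γ + ‖a - v‖) := by
                apply mul_le_mul_of_nonneg_left _ (norm_nonneg w)
                have heq : b (φ n) - v = (b (φ n) - a) + (a - v) := by abel
                calc ‖b (φ n) - v‖ = ‖(b (φ n) - a) + (a - v)‖ := by rw [heq]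
                  _ ≤ ‖b (φ n) - a‖ + ‖a - v‖ := norm_add_le _ _
                  _ ≤ γ + ‖a - v‖ := by linarith [hb (φ n)]
        · have hzt : Filter.Tendsto (fun n => ‖z (φ n)‖) Filter.atTop Filter.atTop := by
            apply Filter.tendsto_atTop_mono (fun n => (hzn (φ n)).le)
            exact Filter.tendsto_atTop_mono (fun n => Nat.cast_le.mpr (hφ.le_apply))
              tendsto_natCast_atTop_atTop
          have : Filter.Tendsto (fun n => ‖z (φ n)‖⁻¹) Filter.atTop (nhds 0) :=
            hzt.inv_tendsto_atTop
          have h := this.const_mul (‖w‖ * (γ + ‖a - v‖))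
          simpa using h
      have hlimE : Filter.Tendsto (fun n => ⟪u (φ n), b (φ n) - v⟫)
          Filter.atTop (nhds ⟪e, bb - v⟫) :=
        heconv.inner (hbconv.sub tendsto_const_nhds)
      exact le_of_tendsto_of_tendsto' hlim0 hlimE hineq
    -- contradiction: take v = bb + γ • e
    have hvdom : (A (bb + γ • e)).Nonempty := by
      apply hdom
      have : bb + γ • e - a = (bb - a) + γ • e := by abel
      rw [this]
      calc ‖(bb - a) + γ • e‖ ≤ ‖bb - a‖ + ‖γ • e‖ := norm_add_le _ _
        _ ≤ γ + γ := by
            rw [norm_smul, henorm, Real.norm_eq_abs, abs_of_pos hγ]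
            simp only [mul_one]
            linarith
        _ = 2 * γ := by ring
    obtain ⟨w, hw⟩ := hvdom
    have h0 := hkey (bb + γ • e) w hw
    have : bb - (bb + γ • e) = -(γ • e) := by abel
    rw [this, inner_neg_right, real_inner_smul_right, real_inner_self_eq_norm_sq,
      henorm] at h0
    nlinarith
  obtain ⟨μ, hμ, hloc⟩ := hbdd
  refine ⟨γ, hγ, μ, hμ, ?_⟩
  intro x y hy
  by_cases hy0 : y = 0
  · subst hy0
    simp only [norm_zero, mul_zero, inner_zero_left]
    have : 0 ≤ μ * ‖x - a‖ := mul_nonneg hμ (norm_nonneg _)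
    nlinarith
  · have hynorm : 0 < ‖y‖ := norm_pos_iff.mpr hy0
    set b : EuclideanSpace ℝ (Fin m) := a + (γ / ‖y‖) • y with hbdef
    have hbnorm : ‖b - a‖ = γ := by
      rw [hbdef]
      have : a + (γ / ‖y‖) • y - a = (γ / ‖y‖) • y := by abel
      rw [this, norm_smul, Real.norm_eq_abs, abs_of_pos (div_pos hγ hynorm)]
      field_simp
    obtain ⟨z, hzA, hzμ⟩ := hloc b (le_of_eq hbnorm)
    have h0 := hmono x b y z hy hzA
    rw [inner_sub_left] at h0
    have hsplit : ⟪y, x - a⟫ = ⟪y, x - b⟫ + ⟪y, b - a⟫ := by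
      rw [← inner_add_right]
      congr 1
      abel
    have hba : ⟪y, b - a⟫ = γ * ‖y‖ := by
      rw [hbdef]
      have : a + (γ / ‖y‖) • y - a = (γ / ‖y‖) • y := by abel
      rw [this, real_inner_smul_right, real_inner_self_eq_norm_sq]
      field_simp
    have hzb : -(μ * (‖x - a‖ + γ)) ≤ ⟪z, x - b⟫ := by
      have h1 : |⟪z, x - b⟫| ≤ ‖z‖ * ‖x - b‖ := abs_real_inner_le_norm _ _
      have h2 : ‖x - b‖ ≤ ‖x - a‖ + γ := by
        have heq : x - b = (x - a) + (a - b) := by abel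
        calc ‖x - b‖ = ‖(x - a) + (a - b)‖ := by rw [heq]
          _ ≤ ‖x - a‖ + ‖a - b‖ := norm_add_le _ _
          _ = ‖x - a‖ + γ := by rw [norm_sub_rev a b, hbnorm]
      have h3 : ‖z‖ * ‖x - b‖ ≤ μ * (‖x - a‖ + γ) := by
        apply mul_le_mul hzμ h2 (norm_nonneg _) hμ
      have := neg_abs_le ⟪z, x - b⟫
      linarith
    have h4 : ⟪z, x - b⟫ ≤ ⟪y, x - b⟫ := by linarith
    nlinarith [hsplit, hba]
end

section
/- Let A be a maximal monotone operator on R^m and a an interior point of D(A). Then A is locally bounded at a: there exist r > 0 and M ≥ 0 such that |y| ≤ M for all x with |x - a| ≤ r and all y ∈ A(x). -/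
open scoped RealInnerProductSpace

set_option maxHeartbeats 1000000

/-- A maximal monotone operator is locally bounded at interior points of its domain. -/
theorem stmt14 {m : ℕ}
    (A : EuclideanSpace ℝ (Fin m) → Set (EuclideanSpace ℝ (Fin m)))
    (hmono : ∀ x₁ x₂ y₁ y₂, y₁ ∈ A x₁ → y₂ ∈ A x₂ → 0 ≤ ⟪y₁ - y₂, x₁ - x₂⟫)
    (hmax : ∀ x y, (∀ x' y', y' ∈ A x' → 0 ≤ ⟪y - y', x - x'⟫) → y ∈ A x)
    (a : EuclideanSpace ℝ (Fin m))
    (ha : a ∈ interior {x | (A x).Nonempty}) :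
    ∃ r : ℝ, 0 < r ∧ ∃ M : ℝ, 0 ≤ M ∧
      ∀ x y, ‖x - a‖ ≤ r → y ∈ A x → ‖y‖ ≤ M := by
  classical
  rcases eq_or_ne m 0 with hm | hm
  · subst hm
    refine ⟨1, one_pos, 0, le_rfl, fun x y _ _ => ?_⟩
    rw [Subsingleton.elim y 0, norm_zero]
  -- main case
  have hm1 : (1 : ℝ) ≤ (m : ℝ) := by
    exact_mod_cast Nat.one_le_iff_ne_zero.mpr hm
  have hsm : (1 : ℝ) ≤ Real.sqrt m := by
    rw [show (1:ℝ) = Real.sqrt 1 by simp]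
    exact Real.sqrt_le_sqrt hm1
  have hsm0 : (0 : ℝ) < Real.sqrt m := lt_of_lt_of_le one_pos hsm
  rcases Metric.mem_nhds_iff.mp (mem_interior_iff_mem_nhds.mp ha) with ⟨ε, hε, hball⟩
  set ρ : ℝ := ε / 2 with hρdef
  have hρ : 0 < ρ := by positivity
  -- the test points
  set σ : Bool → ℝ := fun b => if b then 1 else -1 with hσ
  have hσnorm : ∀ b, ‖σ b‖ = 1 := by
    intro b; cases b <;> simp [hσ]
  set p : Fin m → Bool → EuclideanSpace ℝ (Fin m) :=
    fun i b => a + ρ • EuclideanSpace.single i (σ b) with hp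
  have hpa : ∀ i b, ‖p i b - a‖ = ρ := by
    intro i b
    simp [hp, norm_smul, abs_of_pos hρ, hσnorm b]
  have hpmem : ∀ i b, (A (p i b)).Nonempty := by
    intro i b
    apply hball
    rw [Metric.mem_ball, dist_eq_norm, hpa]
    rw [hρdef]; linarith
  choose v hv using hpmem
  set K : ℝ := (((Finset.univ : Finset (Fin m × Bool)).sup fun q => ‖v q.1 q.2‖₊ : NNReal) : ℝ) with hK
  have hK0 : (0:ℝ) ≤ K := hK ▸ NNReal.coe_nonneg _
  have hKle : ∀ i b, ‖v i b‖ ≤ K := by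
    intro i b
    rw [hK]
    have h := Finset.le_sup (f := fun q : Fin m × Bool => ‖v q.1 q.2‖₊)
      (Finset.mem_univ (i, b))
    simp only at h
    exact_mod_cast h
  set r : ℝ := ρ / (2 * Real.sqrt m) with hr
  have hr0 : 0 < r := by positivity
  refine ⟨r, hr0, 2 * Real.sqrt m * K * (ρ + r) / ρ,
    div_nonneg (mul_nonneg (mul_nonneg (by positivity) hK0) (by positivity)) hρ.le,
    fun x y hx hy => ?_⟩
  -- key componentwise estimate
  have key : ∀ i b, ρ * (σ b * y i) ≤ K * (ρ + r) + ‖y‖ * r := by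
    intro i b
    have h1 : 0 ≤ ⟪y - v i b, x - p i b⟫ := hmono _ _ _ _ hy (hv i b)
    have h2 : ⟪y, p i b - x⟫ ≤ ⟪v i b, p i b - x⟫ := by
      have := h1
      rw [inner_sub_left] at this
      have e1 : ⟪y, p i b - x⟫ = - ⟪y, x - p i b⟫ := by
        rw [← inner_neg_right]; congr 1; abel
      have e2 : ⟪v i b, p i b - x⟫ = - ⟪v i b, x - p i b⟫ := by
        rw [← inner_neg_right]; congr 1; abel
      rw [e1, e2]; linarith
    have h3 : ⟪v i b, p i b - x⟫ ≤ K * (ρ + r) := by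
      calc ⟪v i b, p i b - x⟫ ≤ ‖v i b‖ * ‖p i b - x‖ := real_inner_le_norm _ _
        _ ≤ K * (ρ + r) := by
          apply mul_le_mul (hKle i b) ?_ (norm_nonneg _) hK0
          calc ‖p i b - x‖ = ‖(p i b - a) - (x - a)‖ := by congr 1; abel
            _ ≤ ‖p i b - a‖ + ‖x - a‖ := norm_sub_le _ _
            _ ≤ ρ + r := by rw [hpa]; linarith
    have h4 : ⟪y, p i b - x⟫ = ⟪y, a - x⟫ + ρ * (σ b * y i) := by
      have : p i b - x = (a - x) + ρ • EuclideanSpace.single i (σ b) := by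
        rw [hp]; dsimp only; abel
      have hs : ⟪y, EuclideanSpace.single i (σ b)⟫ = σ b * y i := by
        simpa using EuclideanSpace.inner_single_right (𝕜 := ℝ) i (σ b) y
      rw [this, inner_add_right, real_inner_smul_right, hs]
    have h5 : ⟪y, a - x⟫ ≥ -(‖y‖ * r) := by
      have := real_inner_le_norm y (x - a)
      have e : ⟪y, a - x⟫ = - ⟪y, x - a⟫ := by
        rw [← inner_neg_right]; congr 1; abel
      have hb : ⟪y, x - a⟫ ≤ ‖y‖ * r := by
        calc ⟪y, x - a⟫ ≤ ‖y‖ * ‖x - a‖ := real_inner_le_norm _ _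
          _ ≤ ‖y‖ * r := by
            apply mul_le_mul_of_nonneg_left hx (norm_nonneg _)
      rw [e]; linarith
    nlinarith [h2, h3, h4, h5]
  set B : ℝ := (K * (ρ + r) + ‖y‖ * r) / ρ with hB
  have hB0 : 0 ≤ B := by
    rw [hB]
    apply div_nonneg _ hρ.le
    have h1 : (0:ℝ) ≤ ‖y‖ * r := by positivity
    nlinarith [mul_nonneg hK0 (by positivity : (0:ℝ) ≤ ρ + r)]
  have habs : ∀ i, |y i| ≤ B := by
    intro i
    have h1 := key i true
    have h2 := key i false
    simp only [hσ] at h1 h2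
    norm_num at h1 h2
    have hN1 : y i * ρ ≤ K * (ρ + r) + ‖y‖ * r := by nlinarith
    have hN2 : -(y i) * ρ ≤ K * (ρ + r) + ‖y‖ * r := by nlinarith
    have habs' : |y i| * ρ ≤ K * (ρ + r) + ‖y‖ * r := by
      rcases abs_cases (y i) with ⟨h, _⟩ | ⟨h, _⟩ <;> rw [h] <;> assumption
    rw [hB, le_div_iff₀ hρ]
    exact habs'
  have hnorm : ‖y‖ ≤ Real.sqrt m * B := by
    rw [EuclideanSpace.norm_eq]
    have : ∑ i, ‖y i‖ ^ 2 ≤ ∑ _i : Fin m, B ^ 2 := by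
      apply Finset.sum_le_sum
      intro i _
      have := habs i
      rw [Real.norm_eq_abs]
      nlinarith [abs_nonneg (y i)]
    calc Real.sqrt (∑ i, ‖y i‖ ^ 2) ≤ Real.sqrt (∑ _i : Fin m, B ^ 2) :=
          Real.sqrt_le_sqrt this
      _ = Real.sqrt ((m : ℝ) * B ^ 2) := by rw [Finset.sum_const]; simp [mul_comm]
      _ = Real.sqrt m * B := by
          rw [Real.sqrt_mul (by positivity), Real.sqrt_sq hB0]
  have hhalf : Real.sqrt m * r / ρ = 1 / 2 := by
    rw [hr]; field_simp
  have expand : Real.sqrt m * B = Real.sqrt m * K * (ρ + r) / ρ + ‖y‖ * (Real.sqrt m * r / ρ) := by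
    rw [hB]; field_simp
  rw [expand, hhalf] at hnorm
  rw [le_div_iff₀ hρ]
  have hd : Real.sqrt m * K * (ρ + r) / ρ * ρ = Real.sqrt m * K * (ρ + r) :=
    div_mul_cancel₀ _ hρ.ne'
  nlinarith [mul_le_mul_of_nonneg_right hnorm hρ.le, hd]
end
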